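/- If the real parameters w and φ satisfy 0 < w < 1 and 0 < φ < 2·(1 + w), then every complex root λ of the polynomial λ² − (1 + w − φ)·λ + w satisfies |λ| < 1; hence under these parameter conditions the deterministic PSO iteration matrix is a contraction (spectral radius less than 1). -/

import Mathlib

/-- Under `0 < w < 1` and `0 < φ < 2(1+w)` every root of the PSO
characteristic polynomial lies strictly inside the unit disk. -/
theorem pso_roots_in_unit_disk
    (w φ : ℝ) (hw0 : 0 < w) (hw1 : w < 1)
    (hφ0 : 0 < φ) (hφ2 : φ < 2 * (1 + w)) :
    ∀ z : ℂ,
      z ^ 2 - ((1 + w - φ : ℝ) : ℂ) * z + (w : ℂ) = 0 → ‖z‖ < 1 := by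
  intro z hz
  set b : ℝ := 1 + w - φ with hb
  by_cases him : z.im = 0
  · -- real root
    set x : ℝ := z.re with hx
    have hzx : z = (x : ℂ) := by
      apply Complex.ext <;> simp [hx, him]
    rw [hzx] at hz ⊢
    have hre : x ^ 2 - b * x + w = 0 := by
      have := hz
      push_cast at this
      exact_mod_cast this
    rw [Complex.norm_real, Real.norm_eq_abs]
    rw [abs_lt]
    constructor
    · by_contra h
      push_neg at h
      nlinarith [mul_nonneg (by linarith : (0:ℝ) ≤ -(x + 1)) (by linarith : (0:ℝ) ≤ -(x + w))]
    · by_contra h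
      push_neg at h
      nlinarith [mul_nonneg (by linarith : (0:ℝ) ≤ x - 1) (by linarith : (0:ℝ) ≤ x - w)]
  · -- non-real root: conjugate is also a root
    have hconj : (starRingEnd ℂ) z ^ 2 - ((b : ℝ) : ℂ) * (starRingEnd ℂ) z + (w : ℂ) = 0 := by
      have := congrArg (starRingEnd ℂ) hz
      simpa using this
    have hsub : (z - (starRingEnd ℂ) z) * (z + (starRingEnd ℂ) z - (b : ℂ)) = 0 := by
      linear_combination hz - hconj
    have hne : z - (starRingEnd ℂ) z ≠ 0 := by
      intro h
      apply him
      have : z = (starRingEnd ℂ) z := sub_eq_zero.mp h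
      have := congrArg Complex.im this
      simp [Complex.conj_im] at this
      linarith
    have hsum : z + (starRingEnd ℂ) z = (b : ℂ) := by
      rcases mul_eq_zero.mp hsub with h | h
      · exact absurd h hne
      · exact sub_eq_zero.mp h
    have hprod : z * (starRingEnd ℂ) z = (w : ℂ) := by
      have : z ^ 2 - (z + (starRingEnd ℂ) z) * z + (w : ℂ) = 0 := by rw [hsum]; exact hz
      linear_combination -this
    have habs : ‖z‖ ^ 2 = w := by
      have := congrArg Complex.re hprod
      rw [Complex.mul_conj] at hprod
      have : (Complex.normSq z : ℂ) = (w : ℂ) := hprod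
      have h2 : Complex.normSq z = w := by exact_mod_cast this
      rw [Complex.sq_norm]; exact h2
    nlinarith [norm_nonneg z]
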